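/- Let v, s ∈ ℝ^{2n} have all components positive, let τ > 0, β = √(vs), and suppose Δv, Δs ∈ ℝ^{2n} satisfy √(s/v)Δv + √(v/s)Δs = 2(τe − β) and ΔvᵀΔs ≥ 0. Then the iterates v₊ = v + Δv and s₊ = s + Δs after a full Newton step satisfy the duality gap bound v₊ᵀ s₊ ≤ 2n τ². -/

import Mathlib

open Matrix Finset

/-- duality gap after a full Newton step. If `v, s > 0`, `τ > 0`,
`√(s/v)Δv + √(v/s)Δs = 2(τe − √(vs))` and `ΔvᵀΔs ≥ 0`, then
`(v + Δv)ᵀ(s + Δs) ≤ 2n τ²`. -/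
theorem duality_gap_after_newton_step {n : ℕ}
    (v s : Fin (2 * n) → ℝ) (hv : ∀ i, 0 < v i) (hs : ∀ i, 0 < s i)
    (τ : ℝ) (hτ : 0 < τ)
    (β : Fin (2 * n) → ℝ) (hβ : β = fun i => Real.sqrt (v i * s i))
    (Δv Δs : Fin (2 * n) → ℝ)
    (heq : ∀ i, Real.sqrt (s i / v i) * Δv i + Real.sqrt (v i / s i) * Δs i
        = 2 * (τ - β i))
    (hΔ : 0 ≤ Δv ⬝ᵥ Δs) :
    (v + Δv) ⬝ᵥ (s + Δs) ≤ 2 * n * τ ^ 2 := by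
  subst hβ
  have key : ∀ i, (v i + Δv i) * (s i + Δs i) ≤ τ ^ 2 := by
    intro i
    have hvi := hv i; have hsi := hs i
    set β := Real.sqrt (v i * s i) with hβdef
    have hβ2 : β ^ 2 = v i * s i := Real.sq_sqrt (by positivity)
    have h1 : Real.sqrt (s i / v i) * β = s i := by
      rw [hβdef, ← Real.sqrt_mul (by positivity),
        show s i / v i * (v i * s i) = (s i) ^ 2 by field_simp]
      exact Real.sqrt_sq hsi.le
    have h2 : Real.sqrt (v i / s i) * β = v i := by
      rw [hβdef, ← Real.sqrt_mul (by positivity),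
        show v i / s i * (v i * s i) = (v i) ^ 2 by field_simp]
      exact Real.sqrt_sq hvi.le
    have h3 : Real.sqrt (s i / v i) * Real.sqrt (v i / s i) = 1 := by
      rw [← Real.sqrt_mul (by positivity),
        show s i / v i * (v i / s i) = 1 by field_simp]
      exact Real.sqrt_one
    have ha := heq i
    set A := Real.sqrt (s i / v i) * Δv i with hA
    set B := Real.sqrt (v i / s i) * Δs i with hB
    have hAB : Δv i * Δs i = A * B := by
      rw [hA, hB]; linear_combination (-(Δv i * Δs i)) * h3
    have hsv : s i * Δv i = β * A := by rw [hA]; linear_combination (-(Δv i)) * h1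
    have hvs : v i * Δs i = β * B := by rw [hB]; linear_combination (-(Δs i)) * h2
    nlinarith [sq_nonneg (A - B), sq_nonneg (τ - β)]
  calc (v + Δv) ⬝ᵥ (s + Δs) = ∑ i, (v i + Δv i) * (s i + Δs i) := by
        simp [dotProduct]
    _ ≤ ∑ _i : Fin (2 * n), τ ^ 2 := Finset.sum_le_sum fun i _ => key i
    _ = 2 * n * τ ^ 2 := by simp [Finset.sum_const, mul_comm]
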